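/- arXiv:1708.06924 — 3 statements merged into one kernel-verified Lean document; each statement's English description precedes it below -/
import Mathlib

section
/- For every α₁, α₂, w₁, w₂ ∈ ℂ, one has ‖α₁ K_{w₁} + α₂ K_{w₂}‖_∞ ≥ ρ(w₁,w₂) · ( |α₁| e^{|w₁|²/2} + |α₂| e^{|w₂|²/2} ), i.e. sup_{z∈ℂ} |α₁ e^{\overline{w₁} z} + α₂ e^{\overline{w₂} z}| e^{-|z|²/2} ≥ (|w₁−w₂|² / (2(2+|w₁−w₂|²))) · ( |α₁| e^{|w₁|²/2} + |α₂| e^{|w₂|²/2} ). -/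
open MeasureTheory Filter Bornology
open scoped ENNReal

/-- The (quasi-)norm of the Fock space `F^p`, valued in `ℝ≥0∞`. -/
noncomputable def fockNorm (p : ℝ) (f : ℂ → ℂ) : ℝ≥0∞ :=
  (ENNReal.ofReal (p / (2 * Real.pi)) *
    ∫⁻ z : ℂ, ENNReal.ofReal
      (‖f z‖ ^ p * Real.exp (-(p * ‖z‖ ^ 2) / 2))) ^ (1 / p)

/-- Membership in the Fock space `F^p`: entire with finite Fock norm. -/
def MemFock (p : ℝ) (f : ℂ → ℂ) : Prop :=
  Differentiable ℂ f ∧ fockNorm p f < ⊤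

/-- `T` is bounded from `F^p` to `F^q`. -/
def FockBounded (p q : ℝ) (T : (ℂ → ℂ) → ℂ → ℂ) : Prop :=
  ∃ C : ℝ, 0 ≤ C ∧ ∀ f : ℂ → ℂ, MemFock p f →
    MemFock q (T f) ∧ fockNorm q (T f) ≤ ENNReal.ofReal C * fockNorm p f

/-- `T` is compact from `F^p` to `F^q`. -/
def FockCompact (p q : ℝ) (T : (ℂ → ℂ) → ℂ → ℂ) : Prop :=
  FockBounded p q T ∧
    ∀ f : ℕ → ℂ → ℂ, (∀ n, MemFock p (f n) ∧ fockNorm p (f n) ≤ 1) →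
      ∃ φ : ℕ → ℕ, StrictMono φ ∧ ∃ g : ℂ → ℂ, MemFock q g ∧
        Tendsto (fun k => fockNorm q (fun z => T (f (φ k)) z - g z)) atTop (nhds 0)

/-- The quantity `m_z(ψ, φ) = |ψ(z)| e^{(|φ(z)|² - |z|²)/2}`. -/
noncomputable def mz (ψ φ : ℂ → ℂ) (z : ℂ) : ℝ :=
  ‖ψ z‖ * Real.exp ((‖φ z‖ ^ 2 - ‖z‖ ^ 2) / 2)

/-- `ρ(w₁, w₂) = |w₁ - w₂|² / (2(2 + |w₁ - w₂|²))`. -/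
noncomputable def rho (w₁ w₂ : ℂ) : ℝ :=
  ‖w₁ - w₂‖ ^ 2 / (2 * (2 + ‖w₁ - w₂‖ ^ 2))

/-- The kernel `K_w(z) = e^{\overline{w} z}`. -/
noncomputable def Kfun (w : ℂ) : ℂ → ℂ :=
  fun z => Complex.exp (starRingEnd ℂ w * z)

/-- The normalized kernel `k_w(z) = e^{\overline{w} z - |w|²/2}`. -/
noncomputable def kfun (w : ℂ) : ℂ → ℂ :=
  fun z => Complex.exp (starRingEnd ℂ w * z - (‖w‖ : ℂ) ^ 2 / 2)

/-- The essential norm of `L : F^p → F^q`. -/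
noncomputable def essNorm (p q : ℝ) (L : (ℂ → ℂ) → ℂ → ℂ) : ℝ≥0∞ :=
  sInf { s : ℝ≥0∞ | ∃ K : (ℂ → ℂ) → ℂ → ℂ, IsLinearMap ℂ K ∧ FockCompact p q K ∧
    s = ⨆ f : {f : ℂ → ℂ // MemFock p f ∧ fockNorm p f ≤ 1},
          fockNorm q (fun z => L f.1 z - K f.1 z) }


lemma pointwise_ub (α w z : ℂ) :
    ‖α * Complex.exp (starRingEnd ℂ w * z)‖ * Real.exp (-(‖z‖ ^ 2) / 2) ≤
      ‖α‖ * Real.exp (‖w‖ ^ 2 / 2) := by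
  rw [norm_mul, Complex.norm_exp, mul_assoc, ← Real.exp_add]
  gcongr
  have h1 : (starRingEnd ℂ w * z).re = (z * starRingEnd ℂ w).re := by rw [mul_comm]
  have h2 := Complex.normSq_sub z w
  have h3 := Complex.normSq_nonneg (z - w)
  have h4 := Complex.sq_norm z
  have h5 := Complex.sq_norm w
  nlinarith

lemma pointwise_lb (α₁ α₂ u v : ℂ) :
    ‖α₁‖ * Real.exp (‖u‖ ^ 2 / 2) -
      ‖α₂‖ * Real.exp (‖v‖ ^ 2 / 2) * Real.exp (-(‖u - v‖ ^ 2) / 2) ≤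
    ‖α₁ * Complex.exp (starRingEnd ℂ u * u) +
          α₂ * Complex.exp (starRingEnd ℂ v * u)‖ * Real.exp (-(‖u‖ ^ 2) / 2) := by
  have tri : ‖α₁ * Complex.exp (starRingEnd ℂ u * u)‖ -
      ‖α₂ * Complex.exp (starRingEnd ℂ v * u)‖ ≤
      ‖α₁ * Complex.exp (starRingEnd ℂ u * u) + α₂ * Complex.exp (starRingEnd ℂ v * u)‖ := by
    have := norm_sub_norm_le (α₁ * Complex.exp (starRingEnd ℂ u * u))
      (-(α₂ * Complex.exp (starRingEnd ℂ v * u)))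
    simpa [sub_neg_eq_add] using this
  have e1 : ‖α₁ * Complex.exp (starRingEnd ℂ u * u)‖ * Real.exp (-(‖u‖ ^ 2) / 2)
      = ‖α₁‖ * Real.exp (‖u‖ ^ 2 / 2) := by
    rw [norm_mul, Complex.norm_exp, mul_assoc, ← Real.exp_add]
    congr 1
    rw [Real.exp_eq_exp]
    have h1 : (starRingEnd ℂ u * u).re = Complex.normSq u := by
      rw [mul_comm, Complex.mul_conj]; simp
    have h4 := Complex.sq_norm u
    rw [h1]; linarith
  have e2 : ‖α₂ * Complex.exp (starRingEnd ℂ v * u)‖ * Real.exp (-(‖u‖ ^ 2) / 2)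
      = ‖α₂‖ * Real.exp (‖v‖ ^ 2 / 2) * Real.exp (-(‖u - v‖ ^ 2) / 2) := by
    rw [norm_mul, Complex.norm_exp, mul_assoc, ← Real.exp_add, mul_assoc, ← Real.exp_add]
    congr 1
    rw [Real.exp_eq_exp]
    have h1 : (starRingEnd ℂ v * u).re = (u * starRingEnd ℂ v).re := by rw [mul_comm]
    have h2 := Complex.normSq_sub u v
    have h4 := Complex.sq_norm u
    have h5 := Complex.sq_norm v
    have h6 := Complex.sq_norm (u - v)
    rw [h1]; linarith
  have hpos : (0:ℝ) < Real.exp (-(‖u‖ ^ 2) / 2) := Real.exp_pos _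
  calc ‖α₁‖ * Real.exp (‖u‖ ^ 2 / 2) -
      ‖α₂‖ * Real.exp (‖v‖ ^ 2 / 2) * Real.exp (-(‖u - v‖ ^ 2) / 2)
      = (‖α₁ * Complex.exp (starRingEnd ℂ u * u)‖ -
        ‖α₂ * Complex.exp (starRingEnd ℂ v * u)‖) * Real.exp (-(‖u‖ ^ 2) / 2) := by
        rw [sub_mul, e1, e2]
    _ ≤ _ := by gcongr

theorem kernel_sum_lower_estimate' (α₁ α₂ w₁ w₂ : ℂ) :
    ‖w₁ - w₂‖ ^ 2 / (2 * (2 + ‖w₁ - w₂‖ ^ 2)) * (‖α₁‖ * Real.exp (‖w₁‖ ^ 2 / 2) +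
        ‖α₂‖ * Real.exp (‖w₂‖ ^ 2 / 2)) ≤
      ⨆ z : ℂ, ‖α₁ * Complex.exp (starRingEnd ℂ w₁ * z) +
          α₂ * Complex.exp (starRingEnd ℂ w₂ * z)‖ * Real.exp (-(‖z‖ ^ 2) / 2) := by
  set F : ℂ → ℝ := fun z => ‖α₁ * Complex.exp (starRingEnd ℂ w₁ * z) +
          α₂ * Complex.exp (starRingEnd ℂ w₂ * z)‖ * Real.exp (-(‖z‖ ^ 2) / 2) with hF
  set M₁ : ℝ := ‖α₁‖ * Real.exp (‖w₁‖ ^ 2 / 2) with hM₁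
  set M₂ : ℝ := ‖α₂‖ * Real.exp (‖w₂‖ ^ 2 / 2) with hM₂
  set d2 : ℝ := ‖w₁ - w₂‖ ^ 2 with hd2
  set t : ℝ := Real.exp (-d2 / 2) with ht
  have hbdd : BddAbove (Set.range F) := by
    refine ⟨M₁ + M₂, ?_⟩
    rintro x ⟨z, rfl⟩
    have h1 := pointwise_ub α₁ w₁ z
    have h2 := pointwise_ub α₂ w₂ z
    have tri : ‖α₁ * Complex.exp (starRingEnd ℂ w₁ * z) +
        α₂ * Complex.exp (starRingEnd ℂ w₂ * z)‖ ≤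
        ‖α₁ * Complex.exp (starRingEnd ℂ w₁ * z)‖ +
        ‖α₂ * Complex.exp (starRingEnd ℂ w₂ * z)‖ := norm_add_le _ _
    have hpos : (0:ℝ) < Real.exp (-(‖z‖ ^ 2) / 2) := Real.exp_pos _
    have := mul_le_mul_of_nonneg_right tri hpos.le
    simp only [hF]
    rw [add_mul] at this
    linarith
  have h1 : M₁ - M₂ * t ≤ ⨆ z, F z := by
    refine le_trans ?_ (le_ciSup hbdd w₁)
    have := pointwise_lb α₁ α₂ w₁ w₂
    simpa [hF, hM₁, hM₂, ht, hd2, mul_assoc] using this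
  have h2 : M₂ - M₁ * t ≤ ⨆ z, F z := by
    refine le_trans ?_ (le_ciSup hbdd w₂)
    have := pointwise_lb α₂ α₁ w₂ w₁
    rw [norm_sub_rev] at this
    simpa [hF, hM₁, hM₂, ht, hd2, mul_assoc, add_comm] using this
  have hM₁0 : 0 ≤ M₁ := mul_nonneg (norm_nonneg _) (Real.exp_pos _).le
  have hM₂0 : 0 ≤ M₂ := mul_nonneg (norm_nonneg _) (Real.exp_pos _).le
  have hd0 : 0 ≤ d2 := sq_nonneg _
  have htpos : 0 < t := Real.exp_pos _
  have hte : t * Real.exp (d2 / 2) = 1 := by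
    rw [ht, ← Real.exp_add, neg_div, neg_add_cancel, Real.exp_zero]
  have hexp : 1 + d2 / 2 ≤ Real.exp (d2 / 2) := by
    have := Real.add_one_le_exp (d2 / 2); linarith
  have htb : t * (2 + d2) ≤ 2 := by nlinarith
  rw [div_mul_eq_mul_div, div_le_iff₀ (by positivity : (0:ℝ) < 2 * (2 + d2))]
  nlinarith [mul_le_mul_of_nonneg_left (add_le_add h1 h2) (by positivity : (0:ℝ) ≤ 2 + d2),
    mul_nonneg (mul_nonneg hM₁0 hd0) htpos.le, mul_nonneg (mul_nonneg hM₂0 hd0) htpos.le]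

/-- `‖α₁ K_{w₁} + α₂ K_{w₂}‖_∞ ≥ ρ(w₁,w₂) (|α₁| e^{|w₁|²/2} + |α₂| e^{|w₂|²/2})`. -/
theorem kernel_sum_lower_estimate (α₁ α₂ w₁ w₂ : ℂ) :
    rho w₁ w₂ * (‖α₁‖ * Real.exp (‖w₁‖ ^ 2 / 2) +
        ‖α₂‖ * Real.exp (‖w₂‖ ^ 2 / 2)) ≤
      ⨆ z : ℂ, ‖α₁ * Complex.exp (starRingEnd ℂ w₁ * z) +
          α₂ * Complex.exp (starRingEnd ℂ w₂ * z)‖ * Real.exp (-(‖z‖ ^ 2) / 2) := by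
  simp only [rho]
  exact kernel_sum_lower_estimate' α₁ α₂ w₁ w₂
end

section
/- Let p, q ∈ (1,∞) and let T be a linear map that is compact from F^p to F^q. Then for every sequence (w_n) in ℂ with |w_n| → ∞, one has ‖T k_{w_n}‖_q → 0. -/
open MeasureTheory Filter Bornology
open scoped ENNReal

/-! ### Auxiliary lemmas -/

section Aux

open Real

private lemma exp_rpow' (a b : ℝ) : Real.exp a ^ b = Real.exp (a * b) := by
  rw [Real.exp_mul]

private lemma gauss_lintegral (c : ℝ) (hc : 0 < c) (v : ℂ) :
    ∫⁻ z : ℂ, ENNReal.ofReal (Real.exp (-(c * ‖z - v‖ ^ 2) / 2))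
      = ENNReal.ofReal (2 * Real.pi / c) := by
  rw [lintegral_sub_right_eq_self
    (fun z => ENNReal.ofReal (Real.exp (-(c * ‖z‖ ^ 2) / 2))) v]
  have h2 : ∫⁻ z : ℂ, ENNReal.ofReal (Real.exp (-(c * ‖z‖ ^ 2) / 2))
      = ∫⁻ qq : ℝ × ℝ, ENNReal.ofReal (Real.exp (-(c/2) * qq.1 ^ 2))
          * ENNReal.ofReal (Real.exp (-(c/2) * qq.2 ^ 2)) := by
    rw [← Complex.volume_preserving_equiv_real_prod.lintegral_comp]
    · congr 1; funext z
      rw [← ENNReal.ofReal_mul (Real.exp_pos _).le, ← Real.exp_add]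
      congr 2
      simp only [Complex.measurableEquivRealProd_apply]
      rw [Complex.sq_norm, Complex.normSq_apply]
      ring
    · apply Measurable.fun_mul <;>
        exact (ENNReal.measurable_ofReal.comp
          (Real.measurable_exp.comp (by fun_prop)))
  have hm : Measurable fun x : ℝ => ENNReal.ofReal (Real.exp (-(c/2) * x ^ 2)) := by fun_prop
  rw [h2, Measure.volume_eq_prod ℝ ℝ, lintegral_prod_mul hm.aemeasurable hm.aemeasurable]
  have h3 : ∫⁻ x : ℝ, ENNReal.ofReal (Real.exp (-(c/2) * x ^ 2))
      = ENNReal.ofReal (Real.sqrt (π / (c/2))) := by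
    rw [← ofReal_integral_eq_lintegral_ofReal (integrable_exp_neg_mul_sq (by positivity))
      (Filter.Eventually.of_forall fun x => (Real.exp_pos _).le), integral_gaussian]
  rw [h3, ← ENNReal.ofReal_mul (Real.sqrt_nonneg _), Real.mul_self_sqrt (by positivity)]
  congr 1
  field_simp

private lemma kfun_weight (p : ℝ) (w z : ℂ) :
    ‖kfun w z‖ ^ p * Real.exp (-(p * ‖z‖ ^ 2) / 2)
      = Real.exp (-(p * ‖z - w‖ ^ 2) / 2) := by
  rw [kfun, Complex.norm_exp, exp_rpow', ← Real.exp_add]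
  congr 1
  have h1 : (starRingEnd ℂ w * z - (‖w‖ : ℂ) ^ 2 / 2).re
      = w.re * z.re + w.im * z.im - (w.re ^ 2 + w.im ^ 2) / 2 := by
    simp [Complex.sub_re, Complex.mul_re, Complex.conj_re, Complex.conj_im,
      Complex.div_re, Complex.normSq_apply, Complex.sq_norm]
    rw [← Complex.ofReal_pow, Complex.ofReal_re, Complex.sq_norm, Complex.normSq_apply]
    ring
  rw [h1, Complex.sq_norm, Complex.sq_norm, Complex.normSq_apply, Complex.normSq_apply,
    Complex.sub_re, Complex.sub_im]
  ring

private lemma kfun_weight_one (w z : ℂ) :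
    ‖kfun w z‖ * Real.exp (-(‖z‖ ^ 2) / 2)
      = Real.exp (-(‖z - w‖ ^ 2) / 2) := by
  have := kfun_weight 1 w z
  simpa using this

private lemma fockNorm_kfun (p : ℝ) (hp : 0 < p) (w : ℂ) : fockNorm p (kfun w) = 1 := by
  unfold fockNorm
  simp only [kfun_weight p w]
  rw [gauss_lintegral p hp w, ← ENNReal.ofReal_mul (by positivity)]
  have h : p / (2 * π) * (2 * π / p) = 1 := by
    field_simp
  rw [h, ENNReal.ofReal_one, ENNReal.one_rpow]

private lemma memFock_kfun (p : ℝ) (hp : 0 < p) (w : ℂ) : MemFock p (kfun w) := by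
  constructor
  · exact (((differentiable_const _).mul differentiable_id).sub
      (differentiable_const _)).cexp
  · rw [fockNorm_kfun p hp w]; exact ENNReal.one_lt_top

private lemma real_pow_weight (p : ℝ) (x t : ℝ) (hx : 0 ≤ x) :
    x ^ p * Real.exp (-(p * t) / 2) = (x * Real.exp (-t / 2)) ^ p := by
  rw [Real.mul_rpow hx (Real.exp_pos _).le, exp_rpow']
  congr 2
  ring

private lemma integrand_eq (p : ℝ) (hp : 0 ≤ p) (f : ℂ → ℂ) (z : ℂ) :
    ENNReal.ofReal (‖f z‖ ^ p * Real.exp (-(p * ‖z‖ ^ 2) / 2))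
      = (ENNReal.ofReal (‖f z‖ * Real.exp (-(‖z‖ ^ 2) / 2))) ^ p := by
  rw [real_pow_weight p _ _ (norm_nonneg _),
    ENNReal.ofReal_rpow_of_nonneg (by positivity) hp]

private lemma fockNorm_eq (p : ℝ) (hp : 0 < p) (f : ℂ → ℂ) :
    fockNorm p f = (ENNReal.ofReal (p / (2 * Real.pi))) ^ (1/p) *
      (∫⁻ z : ℂ, (ENNReal.ofReal
        (‖f z‖ * Real.exp (-(‖z‖ ^ 2) / 2))) ^ p) ^ (1/p) := by
  unfold fockNorm
  simp only [integrand_eq p hp.le]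
  rw [ENNReal.mul_rpow_of_nonneg _ _ (by positivity)]

private lemma fock_weight_cont {f : ℂ → ℂ} (hf : Continuous f) :
    Continuous fun z : ℂ => ENNReal.ofReal
      (‖f z‖ * Real.exp (-(‖z‖ ^ 2) / 2)) := by
  apply ENNReal.continuous_ofReal.comp
  exact (continuous_norm.comp hf).mul
    (Real.continuous_exp.comp (((continuous_norm.pow 2).neg).div_const 2))

private lemma fock_add_le (q : ℝ) (hq : 1 ≤ q) (f g : ℂ → ℂ) (hf : Continuous f)
    (hg : Continuous g) :
    fockNorm q (fun z => f z + g z) ≤ fockNorm q f + fockNorm q g := by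
  have hq0 : (0:ℝ) < q := lt_of_lt_of_le one_pos hq
  rw [fockNorm_eq q hq0, fockNorm_eq q hq0, fockNorm_eq q hq0, ← mul_add]
  refine mul_le_mul_right ?_ _
  calc (∫⁻ z : ℂ, (ENNReal.ofReal (‖f z + g z‖
          * Real.exp (-(‖z‖ ^ 2) / 2))) ^ q) ^ (1/q)
      ≤ (∫⁻ z : ℂ, (ENNReal.ofReal (‖f z‖ * Real.exp (-(‖z‖ ^ 2) / 2))
          + ENNReal.ofReal (‖g z‖ * Real.exp (-(‖z‖ ^ 2) / 2))) ^ q)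
          ^ (1/q) := by
        refine ENNReal.rpow_le_rpow (lintegral_mono fun z => ?_) (by positivity)
        refine ENNReal.rpow_le_rpow ?_ hq0.le
        rw [← ENNReal.ofReal_add (by positivity) (by positivity)]
        apply ENNReal.ofReal_le_ofReal
        rw [← add_mul]
        exact mul_le_mul_of_nonneg_right (norm_add_le _ _) (Real.exp_pos _).le
    _ ≤ _ := ENNReal.lintegral_Lp_add_le
        (fock_weight_cont hf).measurable.aemeasurable
        (fock_weight_cont hg).measurable.aemeasurable hq

private lemma fock_zero (q : ℝ) (hq : 0 < q) : fockNorm q (fun _ => (0:ℂ)) = 0 := by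
  unfold fockNorm
  simp only [map_zero, norm_zero, Real.zero_rpow hq.ne', zero_mul, ENNReal.ofReal_zero, lintegral_zero,
    mul_zero]
  exact ENNReal.zero_rpow_of_pos (by positivity)

private lemma fock_sum_le (q : ℝ) (hq : 1 ≤ q) {ι : Type*} (s : Finset ι) (F : ι → ℂ → ℂ)
    (hF : ∀ i ∈ s, Continuous (F i)) :
    fockNorm q (fun z => ∑ i ∈ s, F i z) ≤ ∑ i ∈ s, fockNorm q (F i) := by
  classical
  induction s using Finset.induction_on with
  | empty => simp [fock_zero q (lt_of_lt_of_le one_pos hq)]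
  | insert a s' ha ih =>
    simp only [Finset.sum_insert ha]
    have hc : Continuous fun z => ∑ i ∈ s', F i z :=
      continuous_finset_sum _ fun i hi => hF i (Finset.mem_insert_of_mem hi)
    calc fockNorm q (fun z => F a z + ∑ i ∈ s', F i z)
        ≤ fockNorm q (F a) + fockNorm q (fun z => ∑ i ∈ s', F i z) :=
          fock_add_le q hq _ _ (hF a (Finset.mem_insert_self a s')) hc
      _ ≤ fockNorm q (F a) + ∑ i ∈ s', fockNorm q (F i) :=
          add_le_add_right (ih fun i hi => hF i (Finset.mem_insert_of_mem hi)) _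

private lemma fock_smul (p : ℝ) (hp : 0 < p) (c : ℂ) (f : ℂ → ℂ) :
    fockNorm p (fun z => c * f z) = ENNReal.ofReal (‖c‖) * fockNorm p f := by
  rw [fockNorm_eq p hp, fockNorm_eq p hp]
  have hpt : ∀ z : ℂ, (ENNReal.ofReal (‖c * f z‖
      * Real.exp (-(‖z‖ ^ 2) / 2))) ^ p
      = ENNReal.ofReal (‖c‖) ^ p *
        (ENNReal.ofReal (‖f z‖ * Real.exp (-(‖z‖ ^ 2) / 2))) ^ p := by
    intro z
    rw [norm_mul, mul_assoc, ENNReal.ofReal_mul (norm_nonneg c),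
      ENNReal.mul_rpow_of_nonneg _ _ hp.le]
  simp only [hpt]
  rw [lintegral_const_mul' _ _ (ENNReal.rpow_ne_top_of_nonneg hp.le ENNReal.ofReal_ne_top),
    ENNReal.mul_rpow_of_nonneg _ _ (by positivity : (0:ℝ) ≤ 1/p),
    ← ENNReal.rpow_mul, mul_one_div_cancel hp.ne', ENNReal.rpow_one]
  ring

private lemma fock_sub_comm (q : ℝ) (f g : ℂ → ℂ) :
    fockNorm q (fun z => f z - g z) = fockNorm q (fun z => g z - f z) := by
  unfold fockNorm
  congr 2
  apply lintegral_congr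
  intro z
  simp only
  rw [show f z - g z = -(g z - f z) by ring, norm_neg]

private lemma sep_sum_bound (n : ℕ) (v : Fin n → ℂ) (d : ℝ) (hd : 0 ≤ d)
    (hsep : ∀ i j, i ≠ j → d ≤ ‖v i - v j‖) (z : ℂ) :
    ∑ i, Real.exp (-(‖z - v i‖ ^ 2) / 2)
      ≤ 1 + n * Real.exp (-(d ^ 2 / 8)) := by
  classical
  set S : Finset (Fin n) := Finset.univ.filter fun i => ‖z - v i‖ < d/2 with hS
  have hcard : S.card ≤ 1 := by
    by_contra hcon
    push_neg at hcon
    obtain ⟨a, ha, b, hb, hab⟩ := Finset.one_lt_card.mp hcon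
    have ha' : ‖z - v a‖ < d/2 := (Finset.mem_filter.mp ha).2
    have hb' : ‖z - v b‖ < d/2 := (Finset.mem_filter.mp hb).2
    have hd' : d ≤ ‖v a - v b‖ := hsep a b hab
    have h3 : ‖v a - v b‖ ≤ ‖v a - z‖ + ‖z - v b‖ := by
      calc ‖v a - v b‖ = ‖(v a - z) + (z - v b)‖ := by ring_nf
        _ ≤ _ := norm_add_le _ _
    rw [show v a - z = -(z - v a) by ring, norm_neg] at h3
    linarith
  rw [← Finset.sum_filter_add_sum_filter_not Finset.univ
    (fun i => ‖z - v i‖ < d/2)]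
  have h1 : ∑ i ∈ S, Real.exp (-(‖z - v i‖ ^ 2) / 2) ≤ 1 := by
    calc ∑ i ∈ S, Real.exp (-(‖z - v i‖ ^ 2) / 2)
        ≤ ∑ _i ∈ S, 1 := Finset.sum_le_sum fun i _ =>
          Real.exp_le_one_iff.mpr (by nlinarith [sq_nonneg (‖z - v i‖)])
      _ = S.card := by simp
      _ ≤ 1 := by exact_mod_cast hcard
  have h2 : ∑ i ∈ Finset.univ.filter (fun i => ¬ ‖z - v i‖ < d/2),
      Real.exp (-(‖z - v i‖ ^ 2) / 2) ≤ n * Real.exp (-(d ^ 2 / 8)) := by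
    calc ∑ i ∈ Finset.univ.filter (fun i => ¬ ‖z - v i‖ < d/2),
        Real.exp (-(‖z - v i‖ ^ 2) / 2)
        ≤ ∑ _i ∈ Finset.univ.filter (fun i => ¬ ‖z - v i‖ < d/2),
          Real.exp (-(d ^ 2 / 8)) := by
          refine Finset.sum_le_sum fun i hi => ?_
          have hge : d/2 ≤ ‖z - v i‖ := le_of_not_gt (Finset.mem_filter.mp hi).2
          apply Real.exp_le_exp.mpr
          have h4 : (d/2) ^ 2 ≤ ‖z - v i‖ ^ 2 :=
            pow_le_pow_left₀ (by positivity) hge 2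
          nlinarith
      _ ≤ n * Real.exp (-(d ^ 2 / 8)) := by
          rw [Finset.sum_const, nsmul_eq_mul]
          refine mul_le_mul_of_nonneg_right ?_ (Real.exp_pos _).le
          exact le_trans (Nat.cast_le.mpr (Finset.card_filter_le _ _)) (by simp)
  linarith

private lemma cesaro_bound (p : ℝ) (hp : 1 < p) (n : ℕ) (hn : 0 < n) (v : Fin n → ℂ) (d : ℝ)
    (hd : 0 ≤ d) (hsep : ∀ i j, i ≠ j → d ≤ ‖v i - v j‖) :
    fockNorm p (fun z => ∑ i, (n:ℂ)⁻¹ * kfun (v i) z)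
      ≤ ENNReal.ofReal ((p * (1/n + Real.exp (-(d ^ 2 / 8))) ^ (p-1)) ^ (1/p)) := by
  have hp0 : (0:ℝ) < p := lt_trans one_pos hp
  have hn0 : (0:ℝ) < n := Nat.cast_pos.mpr hn
  set M : ℝ := 1/(n:ℝ) + Real.exp (-(d ^ 2 / 8)) with hMdef
  have hM0 : 0 < M := by positivity
  set s : ℂ → ℂ := fun z => ∑ i, (n:ℂ)⁻¹ * kfun (v i) z with hsdef
  set B : ℂ → ℝ := fun z => (n:ℝ)⁻¹ * ∑ i, Real.exp (-(‖z - v i‖ ^ 2) / 2)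
    with hBdef
  have hA0 : ∀ z : ℂ, 0 ≤ ‖s z‖ * Real.exp (-(‖z‖ ^ 2) / 2) := by
    intro z; positivity
  have hAB : ∀ z : ℂ, ‖s z‖ * Real.exp (-(‖z‖ ^ 2) / 2) ≤ B z := by
    intro z
    have h1 : ‖s z‖ ≤ ∑ i, (n:ℝ)⁻¹ * ‖kfun (v i) z‖ := by
      refine le_trans (norm_sum_le _ _) (le_of_eq ?_)
      refine Finset.sum_congr rfl fun i _ => ?_
      rw [norm_mul, norm_inv, Complex.norm_natCast]
    calc ‖s z‖ * Real.exp (-(‖z‖ ^ 2) / 2)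
        ≤ (∑ i, (n:ℝ)⁻¹ * ‖kfun (v i) z‖) * Real.exp (-(‖z‖ ^ 2) / 2) :=
          mul_le_mul_of_nonneg_right h1 (Real.exp_pos _).le
      _ = B z := by
          simp only [hBdef, Finset.sum_mul, Finset.mul_sum]
          refine Finset.sum_congr rfl fun i _ => ?_
          rw [mul_assoc, kfun_weight_one]
  have hBM : ∀ z : ℂ, B z ≤ M := by
    intro z
    simp only [hBdef, hMdef]
    calc (n:ℝ)⁻¹ * ∑ i, Real.exp (-(‖z - v i‖ ^ 2) / 2)
        ≤ (n:ℝ)⁻¹ * (1 + n * Real.exp (-(d ^ 2 / 8))) :=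
          mul_le_mul_of_nonneg_left (sep_sum_bound n v d hd hsep z) (by positivity)
      _ = 1/(n:ℝ) + Real.exp (-(d ^ 2 / 8)) := by
          field_simp
  have hpt : ∀ z : ℂ, ‖s z‖ ^ p * Real.exp (-(p * ‖z‖ ^ 2) / 2)
      ≤ M ^ (p-1) * B z := by
    intro z
    set A : ℝ := ‖s z‖ * Real.exp (-(‖z‖ ^ 2) / 2) with hAdef
    have h2 : ‖s z‖ ^ p * Real.exp (-(p * ‖z‖ ^ 2) / 2) = A ^ p := by
      rw [hAdef, ← real_pow_weight p _ _ (norm_nonneg _)]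
    rw [h2]
    have h3 : A ^ p = A ^ (p-1) * A := by
      rw [show p = (p-1) + 1 by ring, Real.rpow_add' (hA0 z) (by simp; linarith)]
      rw [Real.rpow_one]
      rw [add_sub_cancel_right]
    rw [h3]
    have h4 : A ^ (p-1) ≤ M ^ (p-1) :=
      Real.rpow_le_rpow (hA0 z) (le_trans (hAB z) (hBM z)) (by linarith)
    exact mul_le_mul h4 (hAB z) (hA0 z) (Real.rpow_nonneg hM0.le _)
  have hmeas : ∀ i : Fin n, Measurable fun z : ℂ =>
      ENNReal.ofReal (Real.exp (-(‖z - v i‖ ^ 2) / 2)) := by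
    intro i
    exact (ENNReal.continuous_ofReal.comp (Real.continuous_exp.comp
      ((((continuous_norm.comp (continuous_id.sub continuous_const)).pow 2).neg).div_const
        2))).measurable
  have hint : (∫⁻ z : ℂ, ENNReal.ofReal
      (‖s z‖ ^ p * Real.exp (-(p * ‖z‖ ^ 2) / 2)))
      ≤ ENNReal.ofReal (M ^ (p-1) * (n:ℝ)⁻¹) * (n * ENNReal.ofReal (2 * π)) := by
    calc (∫⁻ z : ℂ, ENNReal.ofReal
        (‖s z‖ ^ p * Real.exp (-(p * ‖z‖ ^ 2) / 2)))
        ≤ ∫⁻ z : ℂ, ENNReal.ofReal (M ^ (p-1) * B z) :=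
          lintegral_mono fun z => ENNReal.ofReal_le_ofReal (hpt z)
      _ = ENNReal.ofReal (M ^ (p-1) * (n:ℝ)⁻¹)
          * ∑ i, ∫⁻ z : ℂ, ENNReal.ofReal (Real.exp (-(‖z - v i‖ ^ 2) / 2)) := by
          have h5 : ∀ z : ℂ, ENNReal.ofReal (M ^ (p-1) * B z)
              = ENNReal.ofReal (M ^ (p-1) * (n:ℝ)⁻¹)
                * ∑ i, ENNReal.ofReal (Real.exp (-(‖z - v i‖ ^ 2) / 2)) := by
            intro z
            simp only [hBdef]
            rw [show M ^ (p-1) * ((n:ℝ)⁻¹ * ∑ i, Real.exp (-(‖z - v i‖ ^ 2) / 2))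
              = (M ^ (p-1) * (n:ℝ)⁻¹) * ∑ i, Real.exp (-(‖z - v i‖ ^ 2) / 2)
              by ring]
            rw [ENNReal.ofReal_mul (by positivity), ENNReal.ofReal_sum_of_nonneg
              (fun i _ => (Real.exp_pos _).le)]
          simp only [h5]
          rw [lintegral_const_mul' _ _ ENNReal.ofReal_ne_top,
            lintegral_finset_sum _ fun i _ => hmeas i]
      _ = ENNReal.ofReal (M ^ (p-1) * (n:ℝ)⁻¹) * (n * ENNReal.ofReal (2 * π)) := by
          congr 1
          have h6 : ∀ i : Fin n, ∫⁻ z : ℂ,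
              ENNReal.ofReal (Real.exp (-(‖z - v i‖ ^ 2) / 2))
              = ENNReal.ofReal (2 * π) := by
            intro i
            have := gauss_lintegral 1 one_pos (v i)
            simpa using this
          simp [h6, Finset.sum_const]
  unfold fockNorm
  calc (ENNReal.ofReal (p / (2 * π)) * ∫⁻ z : ℂ, ENNReal.ofReal
        (‖s z‖ ^ p * Real.exp (-(p * ‖z‖ ^ 2) / 2))) ^ (1/p)
      ≤ (ENNReal.ofReal (p / (2 * π)) * (ENNReal.ofReal (M ^ (p-1) * (n:ℝ)⁻¹)
        * (n * ENNReal.ofReal (2 * π)))) ^ (1/p) :=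
        ENNReal.rpow_le_rpow (mul_le_mul_right hint _) (by positivity)
    _ = ENNReal.ofReal (p * M ^ (p-1)) ^ (1/p) := by
        congr 1
        rw [show ((n:ℕ) : ℝ≥0∞) = ENNReal.ofReal (n:ℝ) by rw [ENNReal.ofReal_natCast]]
        rw [← ENNReal.ofReal_mul (by positivity), ← ENNReal.ofReal_mul (by positivity),
          ← ENNReal.ofReal_mul (by positivity)]
        congr 1
        have hπ : (0:ℝ) < π := Real.pi_pos
        field_simp
    _ = ENNReal.ofReal ((p * M ^ (p-1)) ^ (1/p)) := by
        rw [ENNReal.ofReal_rpow_of_nonneg (by positivity) (by positivity)]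

private lemma exists_sep (u : ℕ → ℂ) (hu : Tendsto (fun k => ‖u k‖) atTop atTop)
    (K : ℕ) (d : ℝ) (hd : 0 ≤ d) (n : ℕ) :
    ∃ κ : Fin n → ℕ, (∀ i, K ≤ κ i) ∧
      ∀ i j, i ≠ j → d ≤ ‖u (κ i) - u (κ j)‖ := by
  have hex : ∀ b : ℝ, ∃ m : ℕ, K ≤ m ∧ b ≤ ‖u m‖ := by
    intro b
    obtain ⟨m, hm1, hm2⟩ := ((hu.eventually_ge_atTop b).and (eventually_ge_atTop K)).exists
    exact ⟨m, hm2, hm1⟩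
  let κ' : ℕ → ℕ := fun i => Nat.rec (Classical.choose (hex 0))
    (fun _ prev => Classical.choose (hex (‖u prev‖ + d))) i
  have hK : ∀ i, K ≤ κ' i := by
    intro i
    cases i with
    | zero => exact (Classical.choose_spec (hex 0)).1
    | succ j => exact (Classical.choose_spec (hex (‖u (κ' j)‖ + d))).1
  have hstep : ∀ i, ‖u (κ' i)‖ + d ≤ ‖u (κ' (i+1))‖ := by
    intro i
    exact (Classical.choose_spec (hex (‖u (κ' i)‖ + d))).2
  have hmono : ∀ i j : ℕ, i < j → ‖u (κ' i)‖ + d ≤ ‖u (κ' j)‖ := by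
    intro i j hij
    induction j with
    | zero => omega
    | succ m ih =>
      rcases Nat.lt_succ_iff_lt_or_eq.mp hij with h | h
      · calc ‖u (κ' i)‖ + d ≤ ‖u (κ' m)‖ := ih h
          _ ≤ ‖u (κ' m)‖ + d := by linarith
          _ ≤ _ := hstep m
      · subst h; exact hstep i
  refine ⟨fun i => κ' i, fun i => hK _, fun i j hij => ?_⟩
  have key : ∀ a b : ℕ, a < b → d ≤ ‖u (κ' a) - u (κ' b)‖ := by
    intro a b hab
    have h1 := hmono a b hab
    have h2 : ‖u (κ' b)‖ - ‖u (κ' a)‖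
        ≤ ‖u (κ' a) - u (κ' b)‖ := by
      rw [show u (κ' a) - u (κ' b) = -(u (κ' b) - u (κ' a)) by ring, norm_neg]
      exact le_trans (le_abs_self _) (abs_norm_sub_norm_le _ _)
    linarith
  have hij' : (i:ℕ) ≠ (j:ℕ) := fun h => hij (Fin.ext h)
  rcases lt_or_gt_of_ne hij' with h | h
  · exact key i j h
  · rw [show u (κ' i) - u (κ' j) = -(u (κ' j) - u (κ' i)) by ring, norm_neg]
    exact key j i h

private lemma phi_small (p r : ℝ) (hp : 1 < p) (hr : 0 < r) :
    ∃ δ : ℝ, 0 < δ ∧ ∀ M : ℝ, 0 ≤ M → M < δ → (p * M ^ (p-1)) ^ (1/p) < r := by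
  have hp0 : (0:ℝ) < p := lt_trans one_pos hp
  have h1 : ContinuousAt (fun M : ℝ => M ^ (p-1)) 0 :=
    Real.continuousAt_rpow_const 0 _ (Or.inr (by linarith))
  have h2 : ContinuousAt (fun M : ℝ => p * M ^ (p-1)) 0 := continuousAt_const.mul h1
  have h3 : ContinuousAt (fun M : ℝ => (p * M ^ (p-1)) ^ (1/p)) 0 :=
    h2.rpow_const (Or.inr (by positivity))
  have hev : ∀ᶠ M in nhds (0:ℝ), (p * M ^ (p-1)) ^ (1/p) < r := by
    have h4 := h3.tendsto
    have h5 : (p * (0:ℝ) ^ (p-1)) ^ (1/p) = 0 := by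
      rw [Real.zero_rpow (show p - 1 ≠ 0 by linarith), mul_zero,
        Real.zero_rpow (show 1/p ≠ 0 by positivity)]
    rw [h5] at h4
    exact h4.eventually_lt_const hr
  obtain ⟨δ, hδ, hball⟩ := Metric.eventually_nhds_iff.mp hev
  refine ⟨δ, hδ, fun M hM0 hMδ => hball ?_⟩
  rw [Real.dist_eq, sub_zero, abs_of_nonneg hM0]
  exact hMδ

private lemma exists_d (ε : ℝ) (hε : 0 < ε) : ∃ d : ℝ, 0 ≤ d ∧ Real.exp (-(d ^ 2 / 8)) < ε := by
  have h1 : Tendsto (fun d : ℝ => d ^ 2 / 8) atTop atTop :=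
    (tendsto_pow_atTop (two_ne_zero)).atTop_div_const (by norm_num)
  have h2 : Tendsto (fun d : ℝ => Real.exp (-(d ^ 2 / 8))) atTop (nhds 0) :=
    Real.tendsto_exp_atBot.comp (tendsto_neg_atBot_iff.mpr h1)
  obtain ⟨d, hd1, hd2⟩ := ((h2.eventually_lt_const hε).and (eventually_ge_atTop (0:ℝ))).exists
  exact ⟨d, hd2, hd1⟩

end Aux

/-- If `T : F^p → F^q` is linear and compact (`1 < p, q < ∞`), then
`‖T k_{w_n}‖_q → 0` whenever `|w_n| → ∞`. -/
theorem compact_kernel_tendsto_zero (p q : ℝ) (hp : 1 < p) (hq : 1 < q)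
    (T : (ℂ → ℂ) → ℂ → ℂ) (hTlin : IsLinearMap ℂ T) (hTc : FockCompact p q T)
    (w : ℕ → ℂ) (hw : Tendsto (fun n => ‖w n‖) atTop atTop) :
    Tendsto (fun n => fockNorm q (T (kfun (w n)))) atTop (nhds 0) := by
  have hp0 : (0:ℝ) < p := lt_trans one_pos hp
  have hq0 : (0:ℝ) < q := lt_trans one_pos hq
  have hq1 : (1:ℝ) ≤ q := hq.le
  obtain ⟨hTb, hTcpt⟩ := hTc
  obtain ⟨C, hC0, hCb⟩ := hTb
  apply tendsto_of_subseq_tendsto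
  intro ns hns
  set f : ℕ → ℂ → ℂ := fun k => kfun (w (ns k)) with hfdef
  have hf : ∀ k, MemFock p (f k) ∧ fockNorm p (f k) ≤ 1 := fun k =>
    ⟨memFock_kfun p hp0 _, le_of_eq (fockNorm_kfun p hp0 _)⟩
  obtain ⟨φ, hφ, g, hgmem, hconv⟩ := hTcpt f hf
  refine ⟨φ, ?_⟩
  have hgcont : Continuous g := hgmem.1.continuous
  have hTfcont : ∀ k, Continuous (T (f k)) := fun k => (hCb (f k) (hf k).1).1.1.continuous
  -- Step 1 : the limit function `g` has zero Fock norm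
  have hg0 : fockNorm q g = 0 := by
    have key : ∀ ε : ℝ, 0 < ε → fockNorm q g ≤ ENNReal.ofReal ε := by
      intro ε hε
      have hr : (0:ℝ) < ε / (2*(C+1)) := by positivity
      obtain ⟨δ, hδ0, hδ⟩ := phi_small p (ε/(2*(C+1))) hp hr
      obtain ⟨d, hd0, hdlt⟩ := exists_d (δ/2) (by positivity)
      obtain ⟨n, hnpos, hnlt⟩ : ∃ n : ℕ, 0 < n ∧ 1/(n:ℝ) < δ/2 := by
        obtain ⟨n, hn⟩ := exists_nat_one_div_lt (show (0:ℝ) < δ/2 by positivity)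
        refine ⟨n+1, Nat.succ_pos n, ?_⟩
        exact_mod_cast hn
      have hev : ∀ᶠ k in atTop, fockNorm q (fun z => T (f (φ k)) z - g z)
          < ENNReal.ofReal (ε/2) :=
        hconv.eventually_lt_const (ENNReal.ofReal_pos.mpr (by positivity))
      obtain ⟨K, hK⟩ := eventually_atTop.mp hev
      have hu : Tendsto (fun k => ‖w (ns (φ k))‖) atTop atTop :=
        hw.comp (hns.comp hφ.tendsto_atTop)
      obtain ⟨κ, hκK, hκsep⟩ := exists_sep (fun k => w (ns (φ k))) hu K d hd0 n
      set v : Fin n → ℂ := fun i => w (ns (φ (κ i))) with hvdef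
      set s : ℂ → ℂ := fun z => ∑ i, (n:ℂ)⁻¹ * kfun (v i) z with hsdef
      have hsep' : ∀ i j, i ≠ j → d ≤ ‖v i - v j‖ := fun i j hij => hκsep i j hij
      have hMnn : (0:ℝ) ≤ 1/(n:ℝ) + Real.exp (-(d^2/8)) := by positivity
      have hMδ : 1/(n:ℝ) + Real.exp (-(d^2/8)) < δ := by linarith
      have hsnorm : fockNorm p s
          ≤ ENNReal.ofReal ((p * (1/(n:ℝ) + Real.exp (-(d^2/8))) ^ (p-1)) ^ (1/p)) :=
        cesaro_bound p hp n hnpos v d hd0 hsep'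
      have hsdiff : Differentiable ℂ s := by
        apply Differentiable.fun_sum
        intro i _
        exact (memFock_kfun p hp0 (v i)).1.const_mul _
      have hsmem : MemFock p s := ⟨hsdiff, lt_of_le_of_lt hsnorm ENNReal.ofReal_lt_top⟩
      obtain ⟨hTsmem, hTsbound⟩ := hCb s hsmem
      have hTscont : Continuous (T s) := hTsmem.1.continuous
      -- identify `T s` pointwise using linearity
      have hs_sum : s = ∑ i : Fin n, (n:ℂ)⁻¹ • kfun (v i) := by
        funext z
        simp [hsdef, Finset.sum_apply, Pi.smul_apply, smul_eq_mul]
      have hTs_fun : T s = ∑ i : Fin n, (n:ℂ)⁻¹ • T (kfun (v i)) := by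
        rw [hs_sum, show T = ⇑(IsLinearMap.mk' T hTlin) from rfl, map_sum]
        refine Finset.sum_congr rfl fun i _ => ?_
        exact (IsLinearMap.mk' T hTlin).map_smul _ _
      have hTs_eq : ∀ z, T s z = ∑ i : Fin n, (n:ℂ)⁻¹ * T (kfun (v i)) z := by
        intro z
        rw [hTs_fun]
        simp [Finset.sum_apply, Pi.smul_apply, smul_eq_mul]
      -- bound `‖T s‖`
      have hb1 : fockNorm q (T s) ≤ ENNReal.ofReal (ε/2) := by
        refine le_trans hTsbound ?_
        calc ENNReal.ofReal C * fockNorm p s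
            ≤ ENNReal.ofReal C
              * ENNReal.ofReal ((p * (1/(n:ℝ) + Real.exp (-(d^2/8))) ^ (p-1)) ^ (1/p)) :=
              mul_le_mul_right hsnorm _
          _ = ENNReal.ofReal
              (C * (p * (1/(n:ℝ) + Real.exp (-(d^2/8))) ^ (p-1)) ^ (1/p)) :=
              (ENNReal.ofReal_mul hC0).symm
          _ ≤ ENNReal.ofReal (ε/2) := by
              apply ENNReal.ofReal_le_ofReal
              have h7 := hδ _ hMnn hMδ
              calc C * (p * (1/(n:ℝ) + Real.exp (-(d^2/8))) ^ (p-1)) ^ (1/p)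
                  ≤ C * (ε / (2*(C+1))) := mul_le_mul_of_nonneg_left h7.le hC0
                _ ≤ ε/2 := by
                    have hC1 : (0:ℝ) < C + 1 := by linarith
                    have h8 : C * (ε / (2*(C+1))) = (C / (C+1)) * (ε/2) := by
                      field_simp
                    rw [h8]
                    exact mul_le_of_le_one_left (by positivity)
                      ((div_le_one hC1).mpr (by linarith))
      -- bound `‖g - T s‖`
      have hb2 : fockNorm q (fun z => g z - T s z) ≤ ENNReal.ofReal (ε/2) := by
        have hnc : (n:ℂ) * (n:ℂ)⁻¹ = 1 := mul_inv_cancel₀ (Nat.cast_ne_zero.mpr hnpos.ne')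
        have heq : (fun z => g z - T s z)
            = fun z => ∑ i : Fin n, (n:ℂ)⁻¹ * (g z - T (kfun (v i)) z) := by
          funext z
          rw [hTs_eq z]
          rw [show (∑ i : Fin n, (n:ℂ)⁻¹ * (g z - T (kfun (v i)) z))
            = (∑ _i : Fin n, (n:ℂ)⁻¹ * g z) - ∑ i : Fin n, (n:ℂ)⁻¹ * T (kfun (v i)) z by
              rw [← Finset.sum_sub_distrib]
              exact Finset.sum_congr rfl fun i _ => by ring]
          rw [Finset.sum_const, Finset.card_univ, Fintype.card_fin, nsmul_eq_mul,
            ← mul_assoc, hnc, one_mul]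
        rw [heq]
        have hcont : ∀ i : Fin n, Continuous fun z => (n:ℂ)⁻¹ * (g z - T (kfun (v i)) z) := by
          intro i
          have : Continuous (T (kfun (v i))) := hTfcont (φ (κ i))
          exact continuous_const.mul (hgcont.sub this)
        refine le_trans (fock_sum_le q hq1 Finset.univ _ (fun i _ => hcont i)) ?_
        have hterm : ∀ i : Fin n, fockNorm q (fun z => (n:ℂ)⁻¹ * (g z - T (kfun (v i)) z))
            ≤ ENNReal.ofReal ((n:ℝ)⁻¹) * ENNReal.ofReal (ε/2) := by
          intro i
          rw [fock_smul q hq0]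
          rw [show ‖(n:ℂ)⁻¹‖ = (n:ℝ)⁻¹ by rw [norm_inv, Complex.norm_natCast]]
          refine mul_le_mul_right ?_ _
          rw [fock_sub_comm]
          exact (hK (κ i) (hκK i)).le
        calc ∑ i : Fin n, fockNorm q (fun z => (n:ℂ)⁻¹ * (g z - T (kfun (v i)) z))
            ≤ ∑ _i : Fin n, ENNReal.ofReal ((n:ℝ)⁻¹) * ENNReal.ofReal (ε/2) :=
              Finset.sum_le_sum fun i _ => hterm i
          _ = (n:ℝ≥0∞) * (ENNReal.ofReal ((n:ℝ)⁻¹) * ENNReal.ofReal (ε/2)) := by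
              rw [Finset.sum_const, Finset.card_univ, Fintype.card_fin, nsmul_eq_mul]
          _ ≤ ENNReal.ofReal (ε/2) := by
              rw [show ((n:ℕ) : ℝ≥0∞) = ENNReal.ofReal (n:ℝ) by rw [ENNReal.ofReal_natCast]]
              rw [← ENNReal.ofReal_mul (by positivity), ← ENNReal.ofReal_mul (by positivity)]
              apply ENNReal.ofReal_le_ofReal
              rw [show (n:ℝ) * ((n:ℝ)⁻¹ * (ε/2)) = ((n:ℝ) * (n:ℝ)⁻¹) * (ε/2) by ring,
                mul_inv_cancel₀ (Nat.cast_ne_zero.mpr hnpos.ne' : (n:ℝ) ≠ 0), one_mul]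
      -- triangle inequality
      calc fockNorm q g = fockNorm q (fun z => (g z - T s z) + T s z) := by
            congr 1; funext z; ring
        _ ≤ fockNorm q (fun z => g z - T s z) + fockNorm q (fun z => T s z) :=
            fock_add_le q hq1 _ _ (hgcont.sub hTscont) hTscont
        _ ≤ ENNReal.ofReal (ε/2) + ENNReal.ofReal (ε/2) := add_le_add hb2 hb1
        _ = ENNReal.ofReal ε := by
            rw [← ENNReal.ofReal_add (by positivity) (by positivity)]
            norm_num
    refine le_antisymm ?_ zero_le
    refine ENNReal.le_of_forall_pos_le_add fun ε hε _ => ?_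
    rw [zero_add]
    calc fockNorm q g ≤ ENNReal.ofReal ((ε:ℝ)) := key ε (by exact_mod_cast hε)
      _ = (ε : ℝ≥0∞) := ENNReal.ofReal_coe_nnreal
  -- Step 2 : squeeze
  have hle : ∀ k, fockNorm q (T (f (φ k))) ≤ fockNorm q (fun z => T (f (φ k)) z - g z) := by
    intro k
    calc fockNorm q (T (f (φ k)))
        = fockNorm q (fun z => (T (f (φ k)) z - g z) + g z) := by congr 1; funext z; ring
      _ ≤ fockNorm q (fun z => T (f (φ k)) z - g z) + fockNorm q g :=
          fock_add_le q hq1 _ _ ((hTfcont _).sub hgcont) hgcont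
      _ = fockNorm q (fun z => T (f (φ k)) z - g z) := by rw [hg0, add_zero]
  exact tendsto_of_tendsto_of_tendsto_of_le_of_le tendsto_const_nhds hconv
    (fun k => zero_le) hle
end

section
/- Let 0 < q < p < ∞. Then lim_{n→∞} ‖zⁿ‖_p / ‖zⁿ‖_q = 0, where zⁿ denotes the monomial z ↦ zⁿ. -/
open MeasureTheory Filter Bornology
open scoped ENNReal

open Real Filter
open scoped RealInnerProductSpace

namespace MonomialRatioAux


lemma integrable_weight {b : ℝ} (hb : 0 < b) {s : ℝ} (hs : 0 ≤ s) :
    Integrable (fun z : ℂ => ‖z‖ ^ s * Real.exp (-b * ‖z‖ ^ (2:ℝ))) := by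
  have h1 : Integrable (fun z : ℂ => Complex.exp (-((b/2 : ℝ):ℂ) * ‖z‖^2 + 0 * ⟪(0:ℂ), z⟫)) :=
    GaussianFourier.integrable_cexp_neg_mul_sq_norm_add (by simpa using half_pos hb) 0 0
  have h2 : Integrable (fun z : ℂ => Real.exp (-(b/2) * ‖z‖^(2:ℝ))) := by
    refine h1.norm.congr (Eventually.of_forall fun z => ?_)
    simp only [Complex.norm_exp, Real.rpow_two]
    congr 1
    simp only [Complex.add_re, Complex.mul_re, Complex.neg_re, Complex.ofReal_re,
      Complex.ofReal_im, Complex.neg_im, Complex.zero_re, Complex.zero_im]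
    norm_cast
    push_cast
    ring
  have hmeas : AEStronglyMeasurable (fun z : ℂ => ‖z‖ ^ s * Real.exp (-b * ‖z‖ ^ (2:ℝ))) volume := by
    apply Continuous.aestronglyMeasurable
    refine (continuous_norm.rpow_const (fun z => Or.inr hs)).mul
      (Real.continuous_exp.comp ?_)
    exact (continuous_const.mul ((continuous_norm.rpow_const (fun z => Or.inr (by norm_num)))))
  refine (h2.const_mul (Real.exp (s^2/(2*b)))).mono' hmeas (Eventually.of_forall fun z => ?_)
  have hr : (0:ℝ) ≤ ‖z‖ := norm_nonneg z
  rw [Real.norm_of_nonneg (by positivity)]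
  have key : ‖z‖ ^ s ≤ Real.exp (s^2/(2*b)) * Real.exp ((b/2) * ‖z‖^(2:ℝ)) := by
    rcases eq_or_lt_of_le hr with h0 | h0
    · rcases eq_or_lt_of_le hs with h1 | h1
      · rw [← h1, ← h0, Real.rpow_zero]
        have e1 : (1:ℝ) ≤ Real.exp ((0:ℝ)^2/(2*b)) := Real.one_le_exp (by positivity)
        have e2 : (1:ℝ) ≤ Real.exp ((b/2) * (0:ℝ)^(2:ℝ)) := Real.one_le_exp (by positivity)
        nlinarith [Real.exp_nonneg ((0:ℝ)^2/(2*b))]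
      · rw [← h0, Real.zero_rpow (ne_of_gt h1)]
        positivity
    · rw [← Real.exp_log (Real.rpow_pos_of_pos h0 s), Real.log_rpow h0, ← Real.exp_add]
      apply Real.exp_le_exp.2
      have hlog : Real.log ‖z‖ ≤ ‖z‖ - 1 := Real.log_le_sub_one_of_pos h0
      have h2' : s * Real.log ‖z‖ ≤ s * ‖z‖ := by nlinarith
      have hx : s * ‖z‖ ≤ s^2/(2*b) + (b/2) * ‖z‖^(2:ℝ) := by
        rw [Real.rpow_two]
        have h3 : 2*b*(s*‖z‖) ≤ s^2 + b^2*‖z‖^2 := by nlinarith [sq_nonneg (s - b*‖z‖)]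
        have h4 : s*‖z‖ = (2*b*(s*‖z‖))/(2*b) := by field_simp
        rw [h4]
        rw [div_le_iff₀ (by positivity)]
        calc 2*b*(s*‖z‖) ≤ s^2 + b^2*‖z‖^2 := h3
          _ = (s ^ 2 / (2 * b) + b / 2 * ‖z‖ ^ 2) * (2 * b) := by field_simp
      linarith
  calc ‖z‖ ^ s * Real.exp (-b * ‖z‖ ^ (2:ℝ))
      ≤ (Real.exp (s^2/(2*b)) * Real.exp ((b/2) * ‖z‖^(2:ℝ))) * Real.exp (-b * ‖z‖ ^ (2:ℝ)) := by
        apply mul_le_mul_of_nonneg_right key (Real.exp_nonneg _)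
    _ = Real.exp (s^2/(2*b)) * Real.exp (-(b/2) * ‖z‖^(2:ℝ)) := by
        rw [mul_assoc, ← Real.exp_add]; ring_nf


lemma fock_monomial (p : ℝ) (hp : 0 < p) (n : ℕ) :
    (fockNorm p (fun z : ℂ => z ^ n)).toReal
      = ((p/2) ^ (-((n:ℝ) * p) / 2) * Real.Gamma ((n:ℝ)*p/2 + 1)) ^ (1/p) := by
  have hb : (0:ℝ) < p/2 := by positivity
  have hs : (0:ℝ) ≤ (n:ℝ) * p := by positivity
  have hL : (∫⁻ z : ℂ, ENNReal.ofReal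
      (‖z^n‖ ^ p * Real.exp (-(p * ‖z‖ ^ 2) / 2)))
      = ENNReal.ofReal (∫ z : ℂ, ‖z‖ ^ ((n:ℝ)*p) * Real.exp (-(p/2) * ‖z‖ ^ (2:ℝ))) := by
    rw [ofReal_integral_eq_lintegral_ofReal (integrable_weight hb hs)
      (Eventually.of_forall fun z => by positivity)]
    congr 1
    funext z
    congr 1
    rw [norm_pow]
    have hz : (‖z‖ ^ n : ℝ) ^ p = ‖z‖ ^ ((n:ℝ)*p) := by
      rw [← Real.rpow_natCast ‖z‖ n, ← Real.rpow_mul (norm_nonneg z)]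
    have hz2 : (‖z‖ : ℝ) ^ (2:ℝ) = ‖z‖ ^ (2:ℕ) := by
      rw [← Real.rpow_natCast ‖z‖ 2]; norm_num
    rw [hz, hz2]
    congr 1
    ring
  have hI : (∫ z : ℂ, ‖z‖ ^ ((n:ℝ)*p) * Real.exp (-(p/2) * ‖z‖ ^ (2:ℝ)))
      = 2 * π / 2 * (p/2) ^ (-((n:ℝ)*p + 2) / 2) * Real.Gamma (((n:ℝ)*p + 2) / 2) :=
    Complex.integral_rpow_mul_exp_neg_mul_rpow one_le_two (by linarith) hb
  rw [fockNorm, hL, hI, ← ENNReal.ofReal_mul (by positivity), ← ENNReal.toReal_rpow,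
    ENNReal.toReal_ofReal (by positivity)]
  congr 1
  have h2π : (0:ℝ) < 2 * π := by positivity
  have : p / (2 * π) * (2 * π / 2 * (p / 2) ^ (-((n:ℝ) * p + 2) / 2) * Real.Gamma (((n:ℝ) * p + 2) / 2))
      = (p/2) ^ (1 + -((n:ℝ)*p + 2) / 2) * Real.Gamma (((n:ℝ)*p + 2) / 2) := by
    rw [Real.rpow_add hb, Real.rpow_one]
    field_simp
  rw [this]
  congr 2
  · ring
  · ring

noncomputable def gfun (x : ℝ) : ℝ := x * Real.log x - x + Real.log x / 2
noncomputable def lgf (x : ℝ) : ℝ := Real.log (Real.Gamma (x+1))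



lemma fact_bound : ∃ C₀ : ℝ, 0 ≤ C₀ ∧ ∀ m : ℕ, 1 ≤ m →
    |Real.log (Nat.factorial m) - gfun m| ≤ C₀ := by
  obtain ⟨a, ha, hA⟩ := Stirling.stirlingSeq'_bounded_by_pos_constant
  set c1 : ℝ := Stirling.stirlingSeq 1 with hc1
  refine ⟨max |Real.log a| |Real.log c1| + Real.log 2 / 2, by positivity, fun m hm => ?_⟩
  obtain ⟨k, rfl⟩ : ∃ k, m = k + 1 := ⟨m - 1, (Nat.succ_pred_eq_of_pos hm).symm⟩
  have hmpos : (0:ℝ) < (k+1:ℕ) := by positivity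
  have hst : Stirling.stirlingSeq (k+1)
      = (Nat.factorial (k+1) : ℝ) / (Real.sqrt (2*(k+1:ℕ)) * ((k+1:ℕ)/Real.exp 1)^(k+1)) := rfl
  have hden : (0:ℝ) < Real.sqrt (2*(k+1:ℕ)) * ((k+1:ℕ)/Real.exp 1)^(k+1) := by
    apply mul_pos (Real.sqrt_pos.2 (by positivity))
    apply pow_pos (div_pos hmpos (Real.exp_pos 1))
  have hlog : Real.log (Nat.factorial (k+1))
      = Real.log (Stirling.stirlingSeq (k+1)) + (Real.log 2 + Real.log (k+1:ℕ))/2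
        + (k+1:ℕ) * (Real.log (k+1:ℕ) - 1) := by
    rw [hst, Real.log_div (by positivity) (ne_of_gt hden), Real.log_mul
      (ne_of_gt (Real.sqrt_pos.2 (by positivity))) (by positivity),
      Real.log_sqrt (by positivity), Real.log_pow, Real.log_mul (by norm_num) (ne_of_gt hmpos),
      Real.log_div (ne_of_gt hmpos) (ne_of_gt (Real.exp_pos 1)), Real.log_exp]
    push_cast
    ring
  have hsl : Real.log a ≤ Real.log (Stirling.stirlingSeq (k+1)) :=
    Real.log_le_log ha (hA k)
  have hsu : Real.log (Stirling.stirlingSeq (k+1)) ≤ Real.log c1 := by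
    apply Real.log_le_log (lt_of_lt_of_le ha (hA k))
    have h := Stirling.stirlingSeq'_antitone (Nat.zero_le k)
    simpa [hc1, Function.comp] using h
  have habs : |Real.log (Stirling.stirlingSeq (k+1))| ≤ max |Real.log a| |Real.log c1| := by
    rw [abs_le]
    constructor
    · calc -(max |Real.log a| |Real.log c1|) ≤ -|Real.log a| := by
            simp [le_max_left]
        _ ≤ Real.log a := neg_abs_le _
        _ ≤ _ := hsl
    · exact le_trans hsu (le_trans (le_abs_self _) (le_max_right _ _))
  have : Real.log (Nat.factorial (k+1)) - gfun (k+1:ℕ)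
      = Real.log (Stirling.stirlingSeq (k+1)) + Real.log 2 / 2 := by
    rw [hlog, gfun]
    ring
  rw [this]
  calc |Real.log (Stirling.stirlingSeq (k+1)) + Real.log 2 / 2|
      ≤ |Real.log (Stirling.stirlingSeq (k+1))| + |Real.log 2 / 2| := abs_add_le _ _
    _ ≤ max |Real.log a| |Real.log c1| + Real.log 2 / 2 := by
        have h2 : |Real.log 2 / 2| = Real.log 2 / 2 := abs_of_nonneg (by positivity)
        rw [h2]
        exact add_le_add_left habs _



-- Claim U
lemma claimU {M t : ℝ} (hM : 1 ≤ M) (ht0 : 0 ≤ t) (ht1 : t ≤ 1) :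
    (1-t) * gfun M + t * gfun (M+1) ≤ gfun (M+t) + 3 := by
  have hM0 : (0:ℝ) < M := by linarith
  set a := Real.log M with ha
  set b := Real.log (M+1) with hb
  set c := Real.log (M+t) with hc
  have hac : a ≤ c := Real.log_le_log hM0 (by linarith)
  have hcb : c ≤ b := Real.log_le_log (by linarith) (by linarith)
  have hba : b - a ≤ 1/M := by
    have : b - a = Real.log ((M+1)/M) := by
      rw [Real.log_div (by linarith) (ne_of_gt hM0)]
    rw [this]
    have := Real.log_le_sub_one_of_pos (show (0:ℝ) < (M+1)/M by positivity)
    calc Real.log ((M+1)/M) ≤ (M+1)/M - 1 := this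
      _ = 1/M := by field_simp; ring
  have hMba : M * (b - a) ≤ 1 := by
    calc M * (b-a) ≤ M * (1/M) := by nlinarith
      _ = 1 := by field_simp
  have hba1 : b - a ≤ 1 := le_trans hba (by rw [div_le_one hM0]; linarith)
  have hba0 : 0 ≤ b - a := by linarith [Real.log_le_log hM0 (show M ≤ M + 1 by linarith)]
  simp only [gfun, ← ha, ← hb, ← hc]
  nlinarith [mul_nonneg ht0 (sub_nonneg.2 hac), mul_nonneg (sub_nonneg.2 ht1) (sub_nonneg.2 hac),
    mul_nonneg ht0 (sub_nonneg.2 hba0), mul_nonneg ht0 (sub_nonneg.2 hcb),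
    mul_nonneg (sub_nonneg.2 ht1) (sub_nonneg.2 hcb)]

-- Claim L
lemma claimL {M t : ℝ} (hM : 1 ≤ M) (ht0 : 0 ≤ t) (ht1 : t ≤ 1) :
    gfun (M+t) - 3 ≤ gfun (M+1) - (1-t) * Real.log (M+2) := by
  have hM0 : (0:ℝ) < M := by linarith
  set a := Real.log M with ha
  set b := Real.log (M+1) with hb
  set c := Real.log (M+t) with hc
  set d := Real.log (M+2) with hd
  have hac : a ≤ c := Real.log_le_log hM0 (by linarith)
  have hcb : c ≤ b := Real.log_le_log (by linarith) (by linarith)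
  have hda : d - a ≤ 2 := by
    have h1 : d ≤ Real.log (3*M) := Real.log_le_log (by linarith) (by linarith)
    have h2 : Real.log (3*M) = Real.log 3 + a := Real.log_mul (by norm_num) (ne_of_gt hM0)
    have h3 : Real.log 3 ≤ 2 := by
      have := Real.log_le_sub_one_of_pos (show (0:ℝ) < 3 by norm_num)
      linarith
    linarith
  simp only [gfun, ← ha, ← hb, ← hc, ← hd]
  nlinarith [mul_nonneg (sub_nonneg.2 ht1) (sub_nonneg.2 hac),
    mul_nonneg (sub_nonneg.2 ht1) (sub_nonneg.2 hcb),
    mul_nonneg ht0 (sub_nonneg.2 hcb), mul_nonneg ht0 (sub_nonneg.2 hac)]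



lemma lgf_nat (m : ℕ) : lgf m = Real.log (Nat.factorial m) := by
  rw [lgf, Real.Gamma_nat_eq_factorial]

lemma lgf_convex {u v s r : ℝ} (hu : 0 < u) (hv : 0 < v) (hs : 0 ≤ s) (hr : 0 ≤ r)
    (hsr : s + r = 1) : Real.log (Real.Gamma (s*u + r*v)) ≤
      s * Real.log (Real.Gamma u) + r * Real.log (Real.Gamma v) :=
  Real.convexOn_log_Gamma.2 (Set.mem_Ioi.2 hu) (Set.mem_Ioi.2 hv) hs hr hsr

lemma stirling_bound : ∃ C : ℝ, 0 ≤ C ∧ ∀ x : ℝ, 1 ≤ x → |lgf x - gfun x| ≤ C := by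
  obtain ⟨C₀, hC₀, hfb⟩ := fact_bound
  refine ⟨C₀ + 3, by positivity, fun x hx => ?_⟩
  set m := ⌊x⌋₊ with hm
  have hm1 : 1 ≤ m := Nat.le_floor (by exact_mod_cast hx)
  have hM1 : (1:ℝ) ≤ (m:ℝ) := by exact_mod_cast hm1
  have hMx : (m:ℝ) ≤ x := Nat.floor_le (by linarith)
  have hxM : x < (m:ℝ) + 1 := Nat.lt_floor_add_one x
  set t := x - (m:ℝ) with hts
  have ht0 : 0 ≤ t := by simp only [hts]; linarith
  have ht1 : t ≤ 1 := by simp only [hts]; linarith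
  have hxeq : x = (m:ℝ) + t := by simp [hts]
  have hfm : |lgf (m:ℝ) - gfun (m:ℝ)| ≤ C₀ := by rw [lgf_nat]; exact hfb m hm1
  have hfm1 : |lgf ((m:ℝ)+1) - gfun ((m:ℝ)+1)| ≤ C₀ := by
    have h : ((m:ℝ)+1) = ((m+1:ℕ):ℝ) := by push_cast; ring
    rw [h, lgf_nat]
    exact hfb (m+1) (by omega)
  have h2t : (0:ℝ) < 2 - t := by linarith
  have e1 : Real.log (Real.Gamma ((m:ℝ)+1)) = lgf (m:ℝ) := rfl
  have e2 : Real.log (Real.Gamma ((m:ℝ)+2)) = lgf ((m:ℝ)+1) := by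
    rw [lgf, show (m:ℝ)+1+1 = (m:ℝ)+2 by ring]
  -- upper bound
  have hup : lgf x ≤ gfun x + (C₀ + 3) := by
    have hkey : Real.log (Real.Gamma (x+1)) ≤
        (1-t) * Real.log (Real.Gamma ((m:ℝ)+1)) + t * Real.log (Real.Gamma ((m:ℝ)+2)) := by
      have h := lgf_convex (u := (m:ℝ)+1) (v := (m:ℝ)+2) (s := 1-t) (r := t)
        (by positivity) (by positivity) (by linarith) ht0 (by ring)
      have harg : (1-t)*((m:ℝ)+1) + t*((m:ℝ)+2) = x+1 := by rw [hxeq]; ring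
      rwa [harg] at h
    rw [e1, e2] at hkey
    have h1 := (abs_le.1 hfm).2
    have h2 := (abs_le.1 hfm1).2
    have hcu := claimU (M := (m:ℝ)) (t := t) hM1 ht0 ht1
    have hcomb : (1-t) * lgf (m:ℝ) + t * lgf ((m:ℝ)+1)
        ≤ (1-t) * gfun (m:ℝ) + t * gfun ((m:ℝ)+1) + C₀ := by
      nlinarith [mul_le_mul_of_nonneg_left h1 (show (0:ℝ) ≤ 1-t by linarith),
        mul_le_mul_of_nonneg_left h2 ht0]
    have hx' : lgf x ≤ (1-t) * lgf (m:ℝ) + t * lgf ((m:ℝ)+1) := hkey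
    rw [hxeq]
    rw [hxeq] at hx'
    linarith
  -- lower bound
  have hlow : gfun x - (C₀ + 3) ≤ lgf x := by
    have hkey : Real.log (Real.Gamma ((m:ℝ)+2)) ≤
        (1/(2-t)) * Real.log (Real.Gamma (x+1)) + ((1-t)/(2-t)) * Real.log (Real.Gamma ((m:ℝ)+3)) := by
      have h := lgf_convex (u := x+1) (v := (m:ℝ)+3) (s := 1/(2-t)) (r := (1-t)/(2-t))
        (by linarith) (by linarith) (by positivity)
        (div_nonneg (by linarith) (by linarith))
        (by field_simp; ring)
      have harg : (1/(2-t))*(x+1) + ((1-t)/(2-t))*((m:ℝ)+3) = (m:ℝ)+2 := by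
        rw [hxeq]; field_simp; ring
      rwa [harg] at h
    have hstep : Real.log (Real.Gamma ((m:ℝ)+3)) = Real.log (Real.Gamma ((m:ℝ)+2)) + Real.log ((m:ℝ)+2) := by
      have h := Real.Gamma_add_one (s := (m:ℝ)+2) (by positivity)
      have h2 : Real.Gamma ((m:ℝ)+3) = ((m:ℝ)+2) * Real.Gamma ((m:ℝ)+2) := by
        rw [show (m:ℝ)+3 = ((m:ℝ)+2)+1 by ring, h]
      rw [h2, Real.log_mul (by positivity) (ne_of_gt (Real.Gamma_pos_of_pos (by positivity)))]
      ring
    rw [hstep] at hkey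
    -- multiply out
    have h2' : (2-t) * Real.log (Real.Gamma ((m:ℝ)+2)) ≤
        Real.log (Real.Gamma (x+1)) + (1-t) * (Real.log (Real.Gamma ((m:ℝ)+2)) + Real.log ((m:ℝ)+2)) := by
      calc (2-t) * Real.log (Real.Gamma ((m:ℝ)+2))
          ≤ (2-t) * ((1/(2-t)) * Real.log (Real.Gamma (x+1)) + ((1-t)/(2-t)) * (Real.log (Real.Gamma ((m:ℝ)+2)) + Real.log ((m:ℝ)+2))) :=
            mul_le_mul_of_nonneg_left hkey (le_of_lt h2t)
        _ = Real.log (Real.Gamma (x+1)) + (1-t) * (Real.log (Real.Gamma ((m:ℝ)+2)) + Real.log ((m:ℝ)+2)) := by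
            field_simp
    have hge : lgf ((m:ℝ)+1) - (1-t) * Real.log ((m:ℝ)+2) ≤ lgf x := by
      rw [← e2, lgf]
      linarith
    have hcl := claimL (M := (m:ℝ)) (t := t) hM1 ht0 ht1
    have habs := (abs_le.1 hfm1).1
    rw [hxeq]
    rw [hxeq] at hge
    linarith
  rw [abs_le]
  constructor <;> linarith

end MonomialRatioAux

open MonomialRatioAux

/-- For `0 < q < p < ∞`, `‖zⁿ‖_p / ‖zⁿ‖_q → 0` as `n → ∞`. -/
theorem monomial_norm_ratio_tendsto_zero (p q : ℝ) (hq : 0 < q) (hqp : q < p) :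
    Filter.Tendsto (fun n : ℕ => (fockNorm p (fun z : ℂ => z ^ n)).toReal /
        (fockNorm q (fun z : ℂ => z ^ n)).toReal) Filter.atTop (nhds 0) := by
  have hp : 0 < p := lt_trans hq hqp
  obtain ⟨C, hC0, hC⟩ := stirling_bound
  set A : ℕ → ℝ := fun n => ((p/2) ^ (-((n:ℝ) * p) / 2) * Real.Gamma ((n:ℝ)*p/2 + 1)) ^ (1/p) with hA
  set B : ℕ → ℝ := fun n => ((q/2) ^ (-((n:ℝ) * q) / 2) * Real.Gamma ((n:ℝ)*q/2 + 1)) ^ (1/q) with hB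
  have hApos : ∀ n, 0 < A n := fun n => by
    apply Real.rpow_pos_of_pos
    exact mul_pos (Real.rpow_pos_of_pos (by positivity) _)
      (Real.Gamma_pos_of_pos (by positivity))
  have hBpos : ∀ n, 0 < B n := fun n => by
    apply Real.rpow_pos_of_pos
    exact mul_pos (Real.rpow_pos_of_pos (by positivity) _)
      (Real.Gamma_pos_of_pos (by positivity))
  set L : ℕ → ℝ := fun n => Real.log (A n) - Real.log (B n) with hL
  have hlogA : ∀ n : ℕ, Real.log (A n)
      = (1/p) * lgf ((n:ℝ)*p/2) - ((n:ℝ)/2) * Real.log (p/2) := by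
    intro n
    have hbase : (0:ℝ) < (p/2) ^ (-((n:ℝ) * p) / 2) * Real.Gamma ((n:ℝ)*p/2 + 1) :=
      mul_pos (Real.rpow_pos_of_pos (by positivity) _) (Real.Gamma_pos_of_pos (by positivity))
    rw [hA]
    rw [Real.log_rpow hbase, Real.log_mul (ne_of_gt (Real.rpow_pos_of_pos (by positivity) _))
      (ne_of_gt (Real.Gamma_pos_of_pos (by positivity))), Real.log_rpow (by positivity)]
    rw [lgf]
    field_simp
    ring
  have hlogB : ∀ n : ℕ, Real.log (B n)
      = (1/q) * lgf ((n:ℝ)*q/2) - ((n:ℝ)/2) * Real.log (q/2) := by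
    intro n
    have hbase : (0:ℝ) < (q/2) ^ (-((n:ℝ) * q) / 2) * Real.Gamma ((n:ℝ)*q/2 + 1) :=
      mul_pos (Real.rpow_pos_of_pos (by positivity) _) (Real.Gamma_pos_of_pos (by positivity))
    rw [hB]
    rw [Real.log_rpow hbase, Real.log_mul (ne_of_gt (Real.rpow_pos_of_pos (by positivity) _))
      (ne_of_gt (Real.Gamma_pos_of_pos (by positivity))), Real.log_rpow (by positivity)]
    rw [lgf]
    field_simp
    ring
  -- the key upper bound on L n
  set c : ℝ := 1/(2*p) - 1/(2*q) with hc
  have hcneg : c < 0 := by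
    rw [hc, sub_neg]
    apply div_lt_div_of_pos_left one_pos (by positivity)
    linarith
  set D : ℝ := C/p + C/q + Real.log (p/2)/(2*p) - Real.log (q/2)/(2*q) with hD
  have hbound : ∀ n : ℕ, 1 ≤ (n:ℝ) → 1 ≤ (n:ℝ)*p/2 → 1 ≤ (n:ℝ)*q/2 →
      L n ≤ c * Real.log (n:ℝ) + D := by
    intro n hn1 hnp hnq
    have hn0 : (0:ℝ) < (n:ℝ) := by linarith
    have hstp := hC _ hnp
    have hstq := hC _ hnq
    have h1 : (1/p) * lgf ((n:ℝ)*p/2) ≤ (1/p) * (gfun ((n:ℝ)*p/2) + C) := by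
      apply mul_le_mul_of_nonneg_left _ (by positivity)
      linarith [(abs_le.1 hstp).2]
    have h2 : (1/q) * (gfun ((n:ℝ)*q/2) - C) ≤ (1/q) * lgf ((n:ℝ)*q/2) := by
      apply mul_le_mul_of_nonneg_left _ (by positivity)
      linarith [(abs_le.1 hstq).1]
    have hlp : Real.log ((n:ℝ)*p/2) = Real.log (n:ℝ) + Real.log (p/2) := by
      rw [show (n:ℝ)*p/2 = (n:ℝ)*(p/2) by ring, Real.log_mul (ne_of_gt hn0) (by positivity)]
    have hlq : Real.log ((n:ℝ)*q/2) = Real.log (n:ℝ) + Real.log (q/2) := by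
      rw [show (n:ℝ)*q/2 = (n:ℝ)*(q/2) by ring, Real.log_mul (ne_of_gt hn0) (by positivity)]
    have hgp : (1/p) * (gfun ((n:ℝ)*p/2) + C)
        = ((n:ℝ)/2)*(Real.log (n:ℝ) + Real.log (p/2)) - (n:ℝ)/2
          + (Real.log (n:ℝ) + Real.log (p/2))/(2*p) + C/p := by
      rw [gfun, hlp]
      field_simp
    have hgq : (1/q) * (gfun ((n:ℝ)*q/2) - C)
        = ((n:ℝ)/2)*(Real.log (n:ℝ) + Real.log (q/2)) - (n:ℝ)/2
          + (Real.log (n:ℝ) + Real.log (q/2))/(2*q) - C/q := by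
      rw [gfun, hlq]
      field_simp
    rw [hgp] at h1
    rw [hgq] at h2
    have hLn : L n = (1/p) * lgf ((n:ℝ)*p/2) - (1/q) * lgf ((n:ℝ)*q/2)
        - ((n:ℝ)/2) * Real.log (p/2) + ((n:ℝ)/2) * Real.log (q/2) := by
      rw [hL]
      simp only
      rw [hlogA n, hlogB n]
      ring
    rw [hLn, hc, hD]
    have expand : ∀ x y : ℝ, (x + y)/(2*p) = x/(2*p) + y/(2*p) := fun x y => add_div x y _
    rw [expand] at h1
    have expandq : ∀ x y : ℝ, (x + y)/(2*q) = x/(2*q) + y/(2*q) := fun x y => add_div x y _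
    rw [expandq] at h2
    have e1 : Real.log (n:ℝ)/(2*p) = (1/(2*p)) * Real.log (n:ℝ) := by ring
    have e2 : Real.log (n:ℝ)/(2*q) = (1/(2*q)) * Real.log (n:ℝ) := by ring
    nlinarith [h1, h2]
  -- RHS tends to -infty
  have hlogtop : Tendsto (fun n : ℕ => Real.log (n:ℝ)) atTop atTop :=
    Real.tendsto_log_atTop.comp tendsto_natCast_atTop_atTop
  have hrhs : Tendsto (fun n : ℕ => c * Real.log (n:ℝ) + D) atTop atBot := by
    apply tendsto_atBot_add_const_right
    exact Tendsto.const_mul_atTop_of_neg hcneg hlogtop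
  have hLtendsto : Tendsto L atTop atBot := by
    apply tendsto_atBot_mono' atTop _ hrhs
    filter_upwards [eventually_ge_atTop 1,
      eventually_ge_atTop ⌈(2:ℝ)/p⌉₊, eventually_ge_atTop ⌈(2:ℝ)/q⌉₊] with n h1 h2 h3
    have hn1 : 1 ≤ (n:ℝ) := by exact_mod_cast h1
    have hnp : 1 ≤ (n:ℝ)*p/2 := by
      have : (2:ℝ)/p ≤ (n:ℝ) := le_trans (Nat.le_ceil _) (by exact_mod_cast h2)
      have h := mul_le_mul_of_nonneg_right this (by positivity : (0:ℝ) ≤ p/2)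
      calc (1:ℝ) = (2/p)*(p/2) := by field_simp
        _ ≤ (n:ℝ)*(p/2) := h
        _ = (n:ℝ)*p/2 := by ring
    have hnq : 1 ≤ (n:ℝ)*q/2 := by
      have : (2:ℝ)/q ≤ (n:ℝ) := le_trans (Nat.le_ceil _) (by exact_mod_cast h3)
      have h := mul_le_mul_of_nonneg_right this (by positivity : (0:ℝ) ≤ q/2)
      calc (1:ℝ) = (2/q)*(q/2) := by field_simp
        _ ≤ (n:ℝ)*(q/2) := h
        _ = (n:ℝ)*q/2 := by ring
    exact hbound n hn1 hnp hnq
  have hratio : ∀ n, (fockNorm p (fun z : ℂ => z ^ n)).toReal /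
      (fockNorm q (fun z : ℂ => z ^ n)).toReal = Real.exp (L n) := by
    intro n
    rw [fock_monomial p hp n, fock_monomial q hq n, hL]
    simp only
    rw [Real.exp_sub, Real.exp_log (hApos n), Real.exp_log (hBpos n)]
  have : Tendsto (fun n => Real.exp (L n)) atTop (nhds 0) :=
    Real.tendsto_exp_atBot.comp hLtendsto
  refine this.congr fun n => (hratio n).symm
end
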